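/- arXiv:2409.19571 — 3 statements merged into one kernel-verified Lean document; each statement's English description precedes it below -/
import Mathlib

section
/- In the case a = 0, the function f(t,y) = f₁(t) y² + f₂(t) y + f₃(t), with f₁(t) = (γ(T) − γ(t))/(2γ(t)²), f₂(t) = −2r f₁(t), and f₃ solving f₃'(t) = r²/(2σ²) − (r f₂(t)γ(t) + f₁(t)γ(t)²)/σ² with f₃(T) = 0, solves the PDE f_t + (γ(t)²/(2σ²)) f_{yy} + (γ(t)(r−y)/σ²) f_y − (r−y)²/(2σ²) = 0 with terminal condition f(T,·) = 0. -/
open Set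

/-- in the case a = 0, the quadratic-in-y ansatz
f(t,y) = f₁(t)y² + f₂(t)y + f₃(t) solves the PDE
f_t + (γ²/(2σ²)) f_{yy} + (γ(r−y)/σ²) f_y − (r−y)²/(2σ²) = 0, f(T,·) = 0,
where f_y(t,y) = 2f₁(t)y + f₂(t) and f_{yy}(t,y) = 2f₁(t). -/
theorem stmt_9 (r σ σ₀ T : ℝ) (hσ : 0 < σ) (hσ₀ : 0 < σ₀) (hT : 0 < T)
    (γ f₁ f₂ f₃ : ℝ → ℝ) (F : ℝ → ℝ → ℝ)
    (hγ : ∀ t, γ t = ((σ₀ ^ 2)⁻¹ + t * (σ ^ 2)⁻¹)⁻¹)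
    (hf₁ : ∀ t, f₁ t = (γ T - γ t) / (2 * (γ t) ^ 2))
    (hf₂ : ∀ t, f₂ t = -2 * r * f₁ t)
    (hf₃ : ∀ t ∈ Icc (0 : ℝ) T,
      HasDerivAt f₃ (r ^ 2 / (2 * σ ^ 2) - (r * f₂ t * γ t + f₁ t * (γ t) ^ 2) / σ ^ 2) t)
    (hf₃T : f₃ T = 0)
    (hF : ∀ t y, F t y = f₁ t * y ^ 2 + f₂ t * y + f₃ t) :
    ∀ t ∈ Icc (0 : ℝ) T, ∀ y : ℝ,
      -- the y-derivatives of F are 2f₁(t)y + f₂(t) and 2f₁(t):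
      HasDerivAt (fun z => F t z) (2 * f₁ t * y + f₂ t) y ∧
      HasDerivAt (fun z => 2 * f₁ t * z + f₂ t) (2 * f₁ t) y ∧
      -- the time derivative satisfies the PDE:
      HasDerivAt (fun s => F s y)
        (-(((γ t) ^ 2 / (2 * σ ^ 2)) * (2 * f₁ t)
          + (γ t * (r - y) / σ ^ 2) * (2 * f₁ t * y + f₂ t)
          - (r - y) ^ 2 / (2 * σ ^ 2))) t ∧
      -- terminal condition:
      F T y = 0 := by
  have hσ2 : (σ : ℝ) ^ 2 ≠ 0 := by positivity
  have hσ₀2 : (σ₀ : ℝ) ^ 2 ≠ 0 := by positivity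
  intro t ht y
  obtain ⟨ht0, htT⟩ := ht
  -- auxiliary function u
  set u : ℝ → ℝ := fun s => (σ₀ ^ 2)⁻¹ + s * (σ ^ 2)⁻¹ with hu_def
  have hu : ∀ s : ℝ, HasDerivAt u ((σ ^ 2)⁻¹) t := by
    intro s
    simpa [hu_def] using ((hasDerivAt_id t).mul_const ((σ ^ 2)⁻¹)).const_add ((σ₀ ^ 2)⁻¹)
  have hut : 0 < u t := by
    have h1 : (0:ℝ) < (σ₀ ^ 2)⁻¹ := by positivity
    have h2 : (0:ℝ) ≤ t * (σ ^ 2)⁻¹ := by positivity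
    simpa [hu_def] using add_pos_of_pos_of_nonneg h1 h2
  have huT : 0 < u T := by
    have h1 : (0:ℝ) < (σ₀ ^ 2)⁻¹ := by positivity
    have h2 : (0:ℝ) ≤ T * (σ ^ 2)⁻¹ := by positivity
    simpa [hu_def] using add_pos_of_pos_of_nonneg h1 h2
  have hγt : γ t = (u t)⁻¹ := hγ t
  have hγT : γ T = (u T)⁻¹ := hγ T
  have hγt0 : γ t ≠ 0 := by rw [hγt]; exact inv_ne_zero hut.ne'
  -- the explicit polynomial form of f₁
  set g : ℝ → ℝ := fun s => (γ T * u s ^ 2 - u s) / 2 with hg_def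
  have hucont : Continuous u := by
    apply Continuous.add continuous_const
    exact continuous_id.mul continuous_const
  have hev : f₁ =ᶠ[nhds t] g := by
    have hne : ∀ᶠ s in nhds t, u s ≠ 0 :=
      hucont.continuousAt.eventually_ne hut.ne'
    filter_upwards [hne] with s hs
    rw [hf₁ s, hγ s]
    show (γ T - (u s)⁻¹) / (2 * ((u s)⁻¹) ^ 2) = (γ T * u s ^ 2 - u s) / 2
    field_simp
  have hg' : HasDerivAt g ((γ T * (2 * u t ^ 1 * (σ ^ 2)⁻¹) - (σ ^ 2)⁻¹) / 2) t :=
    ((((hu t).pow 2).const_mul (γ T)).sub (hu t)).div_const 2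
  set D₁ : ℝ := (γ T * (2 * u t ^ 1 * (σ ^ 2)⁻¹) - (σ ^ 2)⁻¹) / 2 with hD₁
  have hf₁' : HasDerivAt f₁ D₁ t := hg'.congr_of_eventuallyEq hev
  refine ⟨?_, ?_, ?_, ?_⟩
  · -- y derivative
    have h := (((hasDerivAt_pow 2 y).const_mul (f₁ t)).add
        ((hasDerivAt_id y).const_mul (f₂ t))).add_const (f₃ t)
    simp only [id_eq, Pi.add_apply] at h
    have h2 : (fun z : ℝ => F t z) = fun z : ℝ => f₁ t * z ^ 2 + f₂ t * z + f₃ t := by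
      funext z; exact hF t z
    rw [h2]
    refine h.congr_deriv ?_
    push_cast
    ring
  · -- second y derivative
    have h : HasDerivAt (fun z : ℝ => 2 * f₁ t * z + f₂ t) (2 * f₁ t * 1) y :=
      ((hasDerivAt_id y).const_mul (2 * f₁ t)).add_const (f₂ t)
    simpa using h
  · -- time derivative
    have h2 : (fun s : ℝ => F s y) = fun s : ℝ => f₁ s * y ^ 2 + (-2 * r * f₁ s) * y + f₃ s := by
      funext s; rw [hF s y, hf₂ s]
    rw [h2]
    have h : HasDerivAt (fun s : ℝ => f₁ s * y ^ 2 + (-2 * r * f₁ s) * y + f₃ s)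
        (D₁ * y ^ 2 + (-2 * r * D₁) * y +
          (r ^ 2 / (2 * σ ^ 2) - (r * f₂ t * γ t + f₁ t * (γ t) ^ 2) / σ ^ 2)) t := by
      exact ((hf₁'.mul_const (y ^ 2)).add
        ((hf₁'.const_mul (-2 * r)).mul_const y)).add (hf₃ t ⟨ht0, htT⟩)
    convert h using 1
    rw [hD₁, hf₂ t, hf₁ t, hγt, hγ T]
    have hut0 : u t ≠ 0 := hut.ne'
    have huT0 : u T ≠ 0 := huT.ne'
    field_simp
    ring
  · -- terminal condition
    rw [hF T y, hf₂ T, hf₁ T]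
    simp [hf₃T]
end

section
/- If Z ~ N(m, v) with v > 0 and m < r, then for g̃_y(z) = −(r − z + c)/σ² · 1_{r − z + c ≤ 0} − (r − z − c)/σ² · 1_{r − z − c ≥ 0} with constant c ≥ 0, one has E[g̃_y(Z)] < 0; if m > r then E[g̃_y(Z)] > 0; and if m = r then E[g̃_y(Z)] = 0. -/
open MeasureTheory ProbabilityTheory Real Set

noncomputable def Hfun (r σ c : ℝ) (z : ℝ) : ℝ :=
  (max (z - r - c) 0 + min (z - r + c) 0) / σ ^ 2

lemma Hfun_cont (r σ c : ℝ) : Continuous (Hfun r σ c) := by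
  unfold Hfun; fun_prop

lemma Hfun_mono (r σ c : ℝ) (hσ : 0 < σ) {u w : ℝ} (h : u ≤ w) :
    Hfun r σ c u ≤ Hfun r σ c w := by
  unfold Hfun
  gcongr

lemma Hfun_strict (r σ c : ℝ) (hσ : 0 < σ) (hc : 0 ≤ c) {u w : ℝ}
    (hu : r + c < u) (huw : u < w) : Hfun r σ c u < Hfun r σ c w := by
  unfold Hfun
  rw [max_eq_left (by linarith : (0:ℝ) ≤ u - r - c),
    min_eq_right (by linarith : (0:ℝ) ≤ u - r + c),
    max_eq_left (by linarith : (0:ℝ) ≤ w - r - c),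
    min_eq_right (by linarith : (0:ℝ) ≤ w - r + c)]
  gcongr

lemma Hfun_shift (r r' σ c z : ℝ) : Hfun r σ c z = Hfun r' σ c (z - (r - r')) := by
  unfold Hfun
  have e1 : z - (r - r') - r' - c = z - r - c := by ring
  have e2 : z - (r - r') - r' + c = z - r + c := by ring
  rw [e1, e2]

lemma Hfun_reflect (r σ c a z : ℝ) :
    Hfun r σ c (2 * a - z) = -Hfun (2 * a - r) σ c z := by
  have hmax : ∀ A : ℝ, max (-A) 0 = -min A 0 := fun A => by
    rw [← neg_zero, max_neg_neg, neg_zero]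
  have hmin : ∀ A : ℝ, min (-A) 0 = -max A 0 := fun A => by
    rw [← neg_zero, min_neg_neg, neg_zero]
  unfold Hfun
  have e1 : z - (2 * a - r) - c = -(2 * a - z - r + c) := by ring
  have e2 : z - (2 * a - r) + c = -(2 * a - z - r - c) := by ring
  rw [e1, e2, hmax, hmin]
  ring

lemma Hfun_int (m r σ c : ℝ) (hσ : 0 < σ) (v : NNReal) (hv : v ≠ 0) :
    Integrable (Hfun r σ c) (gaussianReal m v) := by
  rw [gaussianReal_of_var_ne_zero m hv,
    integrable_withDensity_iff (measurable_gaussianPDF m v)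
      (ae_of_all _ fun x => ENNReal.ofReal_lt_top)]
  have hpdf : ∀ x, (gaussianPDF m v x).toReal = gaussianPDFReal m v x := fun x =>
    ENNReal.toReal_ofReal (gaussianPDFReal_nonneg m v x)
  simp_rw [hpdf]
  have hvpos : (0:ℝ) < v := by positivity
  set b : ℝ := (2 * (v:ℝ))⁻¹ with hbdef
  have hbpos : 0 < b := by positivity
  set A : ℝ := (Real.sqrt (2 * π * v))⁻¹ with hAdef
  have hApos : 0 < A := by
    have : (0:ℝ) < π := Real.pi_pos
    positivity
  set D : ℝ := 2 * (|m - r| + |c|) with hDdef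
  have key : Integrable (fun u : ℝ => (2 * |u| + D) * (A * Real.exp (-b * u ^ 2)) / σ ^ 2)
      volume := by
    have h1 : Integrable (fun u : ℝ => u ^ (1:ℝ) * Real.exp (-b * u ^ 2)) volume :=
      integrable_rpow_mul_exp_neg_mul_sq hbpos (by norm_num)
    simp_rw [Real.rpow_one] at h1
    have h2 := h1.abs
    simp_rw [abs_mul, abs_of_pos (Real.exp_pos _)] at h2
    have h3 : Integrable (fun u : ℝ => Real.exp (-b * u ^ 2)) volume :=
      integrable_exp_neg_mul_sq hbpos
    have h4 := (h2.const_mul (2 * A)).add (h3.const_mul (D * A))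
    refine (h4.div_const (σ ^ 2)).congr (ae_of_all _ fun u => ?_)
    simp only [Pi.add_apply]
    ring
  have key2 : Integrable
      (fun x : ℝ => (2 * |x - m| + D) * (A * Real.exp (-b * (x - m) ^ 2)) / σ ^ 2)
      volume := key.comp_sub_right m
  refine key2.mono' ?_ (ae_of_all _ fun x => ?_)
  · exact ((Hfun_cont r σ c).measurable.mul
      (measurable_gaussianPDFReal m v)).aestronglyMeasurable
  · rw [Real.norm_eq_abs, abs_mul, abs_of_nonneg (gaussianPDFReal_nonneg m v x)]
    have hpdf2 : gaussianPDFReal m v x = A * Real.exp (-b * (x - m) ^ 2) := by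
      simp only [gaussianPDFReal_def, hAdef, hbdef]
      have harg : -(x - m) ^ 2 / (2 * (v:ℝ)) = -(2 * (v:ℝ))⁻¹ * (x - m) ^ 2 := by
        field_simp
      rw [harg]
    rw [hpdf2]
    have hexp : 0 ≤ A * Real.exp (-b * (x - m) ^ 2) := by positivity
    rw [show (2 * |x - m| + D) * (A * Real.exp (-b * (x - m) ^ 2)) / σ ^ 2
        = (A * Real.exp (-b * (x - m) ^ 2)) * ((2 * |x - m| + D) / σ ^ 2) from by ring,
      mul_comm (|Hfun r σ c x|)]
    refine mul_le_mul_of_nonneg_left ?_ hexp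
    unfold Hfun
    rw [abs_div, abs_of_nonneg (sq_nonneg σ)]
    gcongr
    have h2 : x - m ≤ |x - m| := le_abs_self _
    have h3 : -(x - m) ≤ |x - m| := neg_le_abs _
    have h4 : m - r ≤ |m - r| := le_abs_self _
    have h5 : -(m - r) ≤ |m - r| := neg_le_abs _
    have h6 : c ≤ |c| := le_abs_self _
    have h7 : -c ≤ |c| := neg_le_abs _
    rw [hDdef]
    rcases le_total (x - r - c) 0 with hA1 | hA1 <;>
      rcases le_total (x - r + c) 0 with hA2 | hA2
    · rw [max_eq_right hA1, min_eq_left hA2]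
      rw [abs_le]; constructor <;> simp <;> linarith
    · rw [max_eq_right hA1, min_eq_right hA2]
      rw [abs_le]; constructor <;> simp <;> linarith
    · rw [max_eq_left (by linarith), min_eq_left hA2]
      rw [abs_le]; constructor <;> linarith
    · rw [max_eq_left (by linarith), min_eq_right hA2]
      rw [abs_le]; constructor <;> simp <;> linarith

lemma gauss_Ioi_pos (m : ℝ) (v : NNReal) (hv : v ≠ 0) (t : ℝ) :
    0 < gaussianReal m v (Set.Ioi t) := by
  rw [pos_iff_ne_zero]
  intro h0
  have := (gaussianReal_absolutelyContinuous' m hv) h0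
  simp [Real.volume_Ioi] at this

lemma gauss_reflect (m : ℝ) (v : NNReal) :
    (gaussianReal m v).map (fun z => 2 * m - z) = gaussianReal m v := by
  have h1 : (fun z : ℝ => 2 * m - z) = ((2 * m : ℝ) + ·) ∘ ((-1 : ℝ) * ·) := by
    funext z; simp; ring
  rw [h1, ← Measure.map_map (by fun_prop) (by fun_prop),
    gaussianReal_map_const_mul, gaussianReal_map_const_add]
  have h2 : NNReal.mk ((-1:ℝ) ^ 2) (sq_nonneg _) = 1 := by ext; norm_num
  rw [h2, one_mul]
  congr 1
  ring

lemma main_neg (m r σ c : ℝ) (v : NNReal) (hv : v ≠ 0) (hσ : 0 < σ) (hc : 0 ≤ c)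
    (hm : m < r) : ∫ z, Hfun r σ c z ∂(gaussianReal m v) < 0 := by
  set μ := gaussianReal m v with hμ
  have hint : Integrable (Hfun r σ c) μ := Hfun_int m r σ c hσ v hv
  have hrefl : ∫ z, Hfun r σ c z ∂μ = ∫ z, Hfun r σ c (2 * m - z) ∂μ := by
    have h := integral_map (μ := μ) (φ := fun z => 2 * m - z)
      ((measurable_const.sub measurable_id).aemeasurable)
      ((Hfun_cont r σ c).aestronglyMeasurable)
    rwa [hμ, gauss_reflect] at h
  have hint2 : Integrable (fun z => Hfun r σ c (2 * m - z)) μ := by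
    refine ((Hfun_int m (2 * m - r) σ c hσ v hv).neg).congr (ae_of_all _ fun z => ?_)
    exact (Hfun_reflect r σ c m z).symm
  have hle : ∀ z, Hfun r σ c z + Hfun r σ c (2 * m - z) ≤ 0 := by
    intro z
    rw [Hfun_reflect]
    have hs := Hfun_shift r (2 * m - r) σ c z
    have hmono := Hfun_mono (2 * m - r) σ c hσ
      (show z - (r - (2 * m - r)) ≤ z by linarith)
    linarith
  have hlt : ∀ z, r + c < z → Hfun r σ c z + Hfun r σ c (2 * m - z) < 0 := by
    intro z hz
    rw [Hfun_reflect]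
    have hs := Hfun_shift r (2 * m - r) σ c z
    have hstrict := Hfun_strict (2 * m - r) σ c hσ hc
      (show (2 * m - r) + c < z - (r - (2 * m - r)) by linarith)
      (show z - (r - (2 * m - r)) < z by linarith)
    linarith
  have hφint : Integrable (fun z => Hfun r σ c z + Hfun r σ c (2 * m - z)) μ :=
    hint.add hint2
  have hpos : 0 < ∫ z, -(Hfun r σ c z + Hfun r σ c (2 * m - z)) ∂μ := by
    rw [integral_pos_iff_support_of_nonneg
      (fun z => neg_nonneg.mpr (hle z)) hφint.neg]
    refine lt_of_lt_of_le (gauss_Ioi_pos m v hv (r + c)) (measure_mono ?_)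
    intro z hz
    simp only [Function.mem_support, ne_eq, neg_eq_zero]
    exact ne_of_lt (hlt z hz)
  rw [integral_neg, integral_add hint hint2, ← hrefl] at hpos
  linarith

/-- for Z ~ N(m,v) with v > 0, the expectation of
g̃_y(z) = −(r−z+c)/σ²·1_{r−z+c ≤ 0} − (r−z−c)/σ²·1_{r−z−c ≥ 0}
is negative if m < r, positive if m > r, and zero if m = r. -/
theorem stmt_13 (m r σ c : ℝ) (v : NNReal) (hv : 0 < v) (hσ : 0 < σ) (hc : 0 ≤ c)
    (gy : ℝ → ℝ)
    (hgy : ∀ z, gy z = -((if r - z + c ≤ 0 then (r - z + c) / σ ^ 2 else 0)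
        + (if 0 ≤ r - z - c then (r - z - c) / σ ^ 2 else 0))) :
    (m < r → (∫ z, gy z ∂(gaussianReal m v)) < 0) ∧
    (r < m → 0 < ∫ z, gy z ∂(gaussianReal m v)) ∧
    (m = r → (∫ z, gy z ∂(gaussianReal m v)) = 0) := by
  have hv' : v ≠ 0 := hv.ne'
  have hσ2 : (0:ℝ) < σ ^ 2 := by positivity
  have hgyH : gy = Hfun r σ c := by
    funext z
    rw [hgy]
    unfold Hfun
    split_ifs with h1 h2
    · rw [max_eq_left (by linarith : (0:ℝ) ≤ z - r - c),
        min_eq_left (by linarith : z - r + c ≤ 0)]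
      field_simp
      try ring
    · rw [max_eq_left (by linarith : (0:ℝ) ≤ z - r - c),
        min_eq_right (by linarith : (0:ℝ) ≤ z - r + c)]
      field_simp
      try ring
    · rw [max_eq_right (by linarith : z - r - c ≤ 0),
        min_eq_left (by linarith : z - r + c ≤ 0)]
      field_simp
      try ring
    · rw [max_eq_right (by linarith : z - r - c ≤ 0),
        min_eq_right (by linarith : (0:ℝ) ≤ z - r + c)]
      simp
  rw [hgyH]
  refine ⟨fun hm => main_neg m r σ c v hv' hσ hc hm, fun hm => ?_, fun hm => ?_⟩
  · -- r < m : reflect through negation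
    have hmapneg : (gaussianReal m v).map ((-1 : ℝ) * ·) = gaussianReal (-m) v := by
      rw [gaussianReal_map_const_mul]
      have h2 : NNReal.mk ((-1:ℝ) ^ 2) (sq_nonneg _) = 1 := by ext; norm_num
      rw [h2, one_mul]
      congr 1
      ring
    have h := integral_map (μ := gaussianReal m v) (φ := ((-1 : ℝ) * ·))
      ((measurable_const_mul _).aemeasurable)
      ((Hfun_cont (-r) σ c).aestronglyMeasurable)
    rw [hmapneg] at h
    have heq : ∀ z : ℝ, Hfun (-r) σ c ((-1 : ℝ) * z) = -Hfun r σ c z := by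
      intro z
      have := Hfun_reflect (-r) σ c 0 z
      simp only [mul_zero, zero_sub, neg_mul, one_mul] at this ⊢
      rw [this]
      norm_num
    simp_rw [heq] at h
    rw [integral_neg] at h
    have hneg := main_neg (-m) (-r) σ c v hv' hσ hc (by linarith)
    rw [h] at hneg
    linarith
  · -- m = r
    rw [hm]
    have hrefl : ∫ z, Hfun r σ c z ∂(gaussianReal r v)
        = ∫ z, Hfun r σ c (2 * r - z) ∂(gaussianReal r v) := by
      have h := integral_map (μ := gaussianReal r v) (φ := fun z => 2 * r - z)
        ((measurable_const.sub measurable_id).aemeasurable)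
        ((Hfun_cont r σ c).aestronglyMeasurable)
      rwa [gauss_reflect] at h
    have hodd : ∀ z : ℝ, Hfun r σ c (2 * r - z) = -Hfun r σ c z := by
      intro z
      rw [Hfun_reflect]
      have : 2 * r - r = r := by ring
      rw [this]
    simp_rw [hodd] at hrefl
    rw [integral_neg] at hrefl
    linarith
end

section
/- Define f_y(t,y) = −∫_t^T (γ(s)/γ(t)) E[g̃_y(s, Y^{t,y}(s))] ds, where g̃_y(s,z) = −(r − z + a√(γ(s)))/σ² · 1_{r−z+a√(γ(s)) ≤ 0} − (r − z − a√(γ(s)))/σ² · 1_{r−z−a√(γ(s)) ≥ 0}. Then f_y(t,y) > 0 for y < r and t ∈ [0,T), f_y(t,r) = 0 for all t, and f_y(t,y) < 0 for y > r and t ∈ [0,T). Moreover, for each fixed t ∈ [0,T), y ↦ f_y(t,y) is monotonically decreasing. -/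
open MeasureTheory ProbabilityTheory Set
open scoped NNReal ENNReal Real

noncomputable def gmS15 (r σ A z : ℝ) : ℝ := (max (z - r - A) 0 + min (z - r + A) 0) / σ ^ 2

lemma gmS15_mono {r σ A : ℝ} (hσ : 0 < σ) : Monotone (gmS15 r σ A) := by
  intro z z' h
  unfold gmS15
  gcongr

lemma gmS15_odd (r σ A z : ℝ) : gmS15 r σ A (2*r - z) = - gmS15 r σ A z := by
  unfold gmS15
  rw [show 2*r - z - r - A = -(z - r + A) by ring, show 2*r - z - r + A = -(z - r - A) by ring,
    show (0:ℝ) = -0 by ring, max_neg_neg, min_neg_neg]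
  ring

lemma gmS15_abs_le {r σ A : ℝ} (hσ : 0 < σ) (hA : 0 ≤ A) (z : ℝ) : |gmS15 r σ A z| ≤ |z - r| / σ ^ 2 := by
  unfold gmS15
  rw [abs_div, abs_of_pos (by positivity : (0:ℝ) < σ ^ 2),
    div_le_div_iff_of_pos_right (by positivity : (0:ℝ) < σ ^ 2)]
  have h1 := le_abs_self (z - r)
  have h2 := neg_abs_le (z - r)
  have h3 := abs_nonneg (z - r)
  rw [abs_le]
  constructor
  · nlinarith [le_max_right (z - r - A) 0,
      le_min (by linarith : -|z-r| ≤ z - r + A) (by linarith : -|z-r| ≤ (0:ℝ))]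
  · nlinarith [min_le_right (z - r + A) 0, max_le (by linarith : z - r - A ≤ |z-r|) h3]

lemma gmS15_of_ge {r σ A z : ℝ} (hA : 0 ≤ A) (hz : r + A ≤ z) :
    gmS15 r σ A z = (z - r - A) / σ ^ 2 := by
  unfold gmS15
  rw [max_eq_left (by linarith), min_eq_right (by linarith)]
  ring

lemma integrable_abs_gaussianS15 : Integrable (fun x : ℝ => |x|) (gaussianReal 0 1) := by
  have h1 : Integrable (fun x : ℝ => x * Real.exp (-(1/2) * x ^ 2)) volume := by
    have := integrable_rpow_mul_exp_neg_mul_sq (by norm_num : (0:ℝ) < 1/2)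
      (by norm_num : (-1:ℝ) < 1)
    simpa [Real.rpow_one] using this
  rw [gaussianReal_of_var_ne_zero 0 one_ne_zero,
    integrable_withDensity_iff (measurable_gaussianPDF 0 1)
      (Filter.Eventually.of_forall fun x => ENNReal.ofReal_lt_top)]
  have h2 : ∀ x : ℝ, (gaussianPDF 0 1 x).toReal = gaussianPDFReal 0 1 x := fun x =>
    ENNReal.toReal_ofReal (gaussianPDFReal_nonneg _ _ _)
  simp only [h2, gaussianPDFReal]
  have h3 : Integrable (fun x : ℝ => (Real.sqrt (2 * Real.pi))⁻¹ * |x * Real.exp (-(1/2) * x ^ 2)|)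
      volume := h1.abs.const_mul _
  refine h3.congr (Filter.Eventually.of_forall fun x => ?_)
  simp only [abs_mul, abs_of_pos (Real.exp_pos _), NNReal.coe_one, mul_one, sub_zero]
  ring_nf

lemma transfer_gaussianS15 {g : ℝ → ℝ} (hg : Measurable g) (m : ℝ) (v : ℝ≥0) :
    ∫ z, g z ∂(gaussianReal m v) = ∫ x, g (m + Real.sqrt v * x) ∂(gaussianReal 0 1) := by
  have h1 : (gaussianReal 0 1).map (fun x => Real.sqrt v * x) = gaussianReal 0 v := by
    rw [show (fun x : ℝ => Real.sqrt v * x) = (Real.sqrt v * ·) from rfl,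
      gaussianReal_map_const_mul]
    congr 1
    · ring
    · ext
      simp [Real.sq_sqrt v.2]
  have h2 : (gaussianReal 0 v).map (fun x => m + x) = gaussianReal m v := by
    rw [show (fun x : ℝ => m + x) = (m + ·) from rfl, gaussianReal_map_const_add, zero_add]
  rw [← h2, ← h1, Measure.map_map (by fun_prop) (by fun_prop),
    integral_map (by fun_prop) hg.aestronglyMeasurable]
  rfl

lemma symm_integral_gaussianS15 {f : ℝ → ℝ} (hf : Measurable f) (hodd : ∀ x, f (-x) = - f x) :
    ∫ x, f x ∂(gaussianReal 0 1) = 0 := by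
  have hneg : (gaussianReal 0 1).map (fun x : ℝ => -x) = gaussianReal 0 1 := by
    rw [show (fun x : ℝ => -x) = ((-1 : ℝ) * ·) by funext x; ring, gaussianReal_map_const_mul]
    congr 1
    · ring
    · ext
      norm_num
  have h : ∫ x, f x ∂(gaussianReal 0 1) = ∫ x, f (-x) ∂(gaussianReal 0 1) := by
    conv_lhs => rw [← hneg]
    rw [integral_map (by fun_prop) (by rw [hneg]; exact hf.aestronglyMeasurable)]
  simp only [hodd] at h
  rw [integral_neg] at h
  linarith

lemma gmS15_measurable (r σ A : ℝ) : Measurable (gmS15 r σ A) := by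
  unfold gmS15
  fun_prop

lemma integrable_gmS15_affine {r σ A : ℝ} (hσ : 0 < σ) (hA : 0 ≤ A) {e : ℝ} (he : 0 ≤ e) (m : ℝ) :
    Integrable (fun x => gmS15 r σ A (m + e * x)) (gaussianReal 0 1) := by
  have hb : Integrable (fun x : ℝ => (|m - r| + e * |x|) / σ ^ 2) (gaussianReal 0 1) :=
    ((integrable_const _).add (integrable_abs_gaussianS15.const_mul e)).div_const _
  refine hb.mono' ((gmS15_measurable r σ A).comp (by fun_prop)).aestronglyMeasurable
    (Filter.Eventually.of_forall fun x => ?_)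
  rw [Real.norm_eq_abs]
  refine (gmS15_abs_le hσ hA _).trans ?_
  gcongr
  calc |m + e * x - r| ≤ |m - r| + |e * x| := by
        rw [show m + e * x - r = (m - r) + e * x by ring]; exact abs_add_le _ _
    _ = |m - r| + e * |x| := by rw [abs_mul, abs_of_nonneg he]

lemma abs_integral_gmS15_le {r σ A : ℝ} (hσ : 0 < σ) (hA : 0 ≤ A) {e : ℝ} (he : 0 ≤ e) (m : ℝ) :
    |∫ x, gmS15 r σ A (m + e * x) ∂(gaussianReal 0 1)|
      ≤ (|m - r| + e * ∫ x, |x| ∂(gaussianReal 0 1)) / σ ^ 2 := by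
  have habs : |∫ x, gmS15 r σ A (m + e * x) ∂(gaussianReal 0 1)|
      ≤ ∫ x, |gmS15 r σ A (m + e * x)| ∂(gaussianReal 0 1) := by
    simpa [Real.norm_eq_abs] using
      norm_integral_le_integral_norm (μ := gaussianReal 0 1)
        (fun x => gmS15 r σ A (m + e * x))
  refine habs.trans ?_
  have hb : Integrable (fun x : ℝ => (|m - r| + e * |x|) / σ ^ 2) (gaussianReal 0 1) :=
    ((integrable_const _).add (integrable_abs_gaussianS15.const_mul e)).div_const _
  calc ∫ x, |gmS15 r σ A (m + e * x)| ∂(gaussianReal 0 1)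
      ≤ ∫ x, (|m - r| + e * |x|) / σ ^ 2 ∂(gaussianReal 0 1) := by
        refine integral_mono (integrable_gmS15_affine hσ hA he m).abs hb fun x => ?_
        refine (gmS15_abs_le hσ hA _).trans ?_
        gcongr
        calc |m + e * x - r| ≤ |m - r| + |e * x| := by
              rw [show m + e * x - r = (m - r) + e * x by ring]; exact abs_add_le _ _
          _ = |m - r| + e * |x| := by rw [abs_mul, abs_of_nonneg he]
    _ = (|m - r| + e * ∫ x, |x| ∂(gaussianReal 0 1)) / σ ^ 2 := by
        rw [integral_div, integral_add (integrable_const _)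
          (integrable_abs_gaussianS15.const_mul e), integral_const, MeasureTheory.integral_const_mul]
        simp

lemma integral_gmS15_mono {r σ A : ℝ} (hσ : 0 < σ) (hA : 0 ≤ A) {e : ℝ} (he : 0 ≤ e)
    {m m' : ℝ} (hm : m ≤ m') :
    ∫ x, gmS15 r σ A (m + e * x) ∂(gaussianReal 0 1)
      ≤ ∫ x, gmS15 r σ A (m' + e * x) ∂(gaussianReal 0 1) :=
  integral_mono (integrable_gmS15_affine hσ hA he m) (integrable_gmS15_affine hσ hA he m')
    fun x => gmS15_mono hσ (by linarith)

lemma integral_gmS15_symm {r σ A : ℝ} (hA : 0 ≤ A) (e : ℝ) :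
    ∫ x, gmS15 r σ A (r + e * x) ∂(gaussianReal 0 1) = 0 := by
  refine symm_integral_gaussianS15 ((gmS15_measurable r σ A).comp (by fun_prop)) fun x => ?_
  rw [show r + e * -x = 2 * r - (r + e * x) by ring, gmS15_odd]

lemma gaussianReal_Ioi_pos (x₀ : ℝ) : 0 < gaussianReal 0 1 (Ioi x₀) := by
  rw [zero_lt_iff]
  intro h
  have hac := gaussianReal_absolutelyContinuous' 0 one_ne_zero (s := Ioi x₀) h
  simp [Real.volume_Ioi] at hac

lemma integral_gmS15_strict {r σ A : ℝ} (hσ : 0 < σ) (hA : 0 ≤ A) {e : ℝ} (he : 0 < e)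
    {m m' : ℝ} (hm : m < m') :
    ∫ x, gmS15 r σ A (m + e * x) ∂(gaussianReal 0 1)
      < ∫ x, gmS15 r σ A (m' + e * x) ∂(gaussianReal 0 1) := by
  set N := gaussianReal 0 1
  set D : ℝ → ℝ := fun x => gmS15 r σ A (m' + e * x) - gmS15 r σ A (m + e * x) with hD
  have hint := integrable_gmS15_affine (r := r) hσ hA he.le m
  have hint' := integrable_gmS15_affine (r := r) hσ hA he.le m'
  have hDint : Integrable D N := hint'.sub hint
  have hDnn : ∀ x, 0 ≤ D x := fun x => by
    have := gmS15_mono (A := A) (r := r) hσ (by nlinarith : m + e * x ≤ m' + e * x)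
    simpa [hD] using this
  set x₀ := (r + A - m) / e with hx₀
  have hconst : ∀ x ∈ Ioi x₀, D x = (m' - m) / σ ^ 2 := by
    intro x hx
    have hex : r + A - m < e * x := by
      rw [mem_Ioi, hx₀, div_lt_iff₀ he] at hx
      linarith [hx]
    rw [hD]
    simp only
    rw [gmS15_of_ge hA (by linarith), gmS15_of_ge hA (by linarith)]
    ring
  have hsub : ∫ x in Ioi x₀, D x ∂N ≤ ∫ x, D x ∂N :=
    setIntegral_le_integral hDint (Filter.Eventually.of_forall hDnn)
  have hset : ∫ x in Ioi x₀, D x ∂N = ((m' - m) / σ ^ 2) * (N (Ioi x₀)).toReal := by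
    rw [setIntegral_congr_fun measurableSet_Ioi hconst, setIntegral_const, smul_eq_mul, mul_comm]
    rfl
  have hpos : 0 < ∫ x in Ioi x₀, D x ∂N := by
    rw [hset]
    apply mul_pos (div_pos (by linarith) (by positivity))
    have h1 := gaussianReal_Ioi_pos x₀
    have h2 : N (Ioi x₀) ≠ ⊤ := measure_ne_top _ _
    exact ENNReal.toReal_pos h1.ne' h2
  have : 0 < ∫ x, D x ∂N := lt_of_lt_of_le hpos hsub
  rw [hD] at this
  rw [integral_sub hint' hint] at this
  linarith

noncomputable def FS15 (r σ : ℝ) (γ : ℝ → ℝ) (a t y s : ℝ) : ℝ :=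
  (γ s / γ t) * ∫ x, gmS15 r σ (a * Real.sqrt (γ s))
    ((γ s / γ t) * (y - r) + r +
      Real.sqrt ((Real.toNNReal (γ s ^ 2 * (s - t) / σ ^ 2) : ℝ)) * x)
    ∂(gaussianReal 0 1)

lemma FS15_measurable {r σ : ℝ} {γ : ℝ → ℝ} {a t y : ℝ} (hγm : Measurable γ) :
    Measurable (fun s => FS15 r σ γ a t y s) := by
  unfold FS15
  have hG : Measurable (fun p : ℝ × ℝ => gmS15 r σ (a * Real.sqrt (γ p.1))
      ((γ p.1 / γ t) * (y - r) + r +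
        Real.sqrt ((Real.toNNReal (γ p.1 ^ 2 * (p.1 - t) / σ ^ 2) : ℝ)) * p.2)) := by
    unfold gmS15
    simp only [Real.coe_toNNReal']
    fun_prop
  have h1 := hG.stronglyMeasurable.integral_prod_right' (ν := gaussianReal 0 1)
  exact (hγm.div_const _).mul h1.measurable

lemma FS15_r_zero {r σ : ℝ} {γ : ℝ → ℝ} {a : ℝ} (hσ : 0 < σ) (ha : 0 ≤ a) (t s : ℝ) :
    FS15 r σ γ a t r s = 0 := by
  unfold FS15
  rw [show (γ s / γ t) * (r - r) + r = r by ring,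
    integral_gmS15_symm (mul_nonneg ha (Real.sqrt_nonneg _)) _, mul_zero]

section FS15Props

variable {r σ σ₀ a T t : ℝ} {γ : ℝ → ℝ}

lemma FS15_bound (hσ : 0 < σ) (ha : 0 ≤ a)
    (hγpos : ∀ s, 0 ≤ s → 0 < γ s) (hγanti : ∀ s u, 0 ≤ s → s ≤ u → γ u ≤ γ s)
    (hγub : ∀ s, 0 ≤ s → γ s ≤ σ₀ ^ 2)
    (ht : 0 ≤ t) (hT : t ≤ T) (y : ℝ) {s : ℝ} (hs : s ∈ Ioc t T) :
    |FS15 r σ γ a t y s| ≤ (|y - r| + Real.sqrt (σ₀ ^ 4 * T / σ ^ 2) *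
      ∫ x, |x| ∂(gaussianReal 0 1)) / σ ^ 2 := by
  obtain ⟨hst, hsT⟩ := hs
  have hs0 : (0:ℝ) ≤ s := le_of_lt (lt_of_le_of_lt ht hst)
  have hγs : 0 < γ s := hγpos s hs0
  have hγt : 0 < γ t := hγpos t ht
  have hc0 : 0 < γ s / γ t := div_pos hγs hγt
  have hc1 : γ s / γ t ≤ 1 := (div_le_one hγt).mpr (hγanti t s ht hst.le)
  have hK : 0 ≤ ∫ x, |x| ∂(gaussianReal 0 1) := integral_nonneg fun x => abs_nonneg x
  set e := Real.sqrt ((Real.toNNReal (γ s ^ 2 * (s - t) / σ ^ 2) : ℝ)) with he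
  have he0 : 0 ≤ e := Real.sqrt_nonneg _
  have heB : e ≤ Real.sqrt (σ₀ ^ 4 * T / σ ^ 2) := by
    rw [he]
    apply Real.sqrt_le_sqrt
    rw [Real.coe_toNNReal']
    have hw : γ s ^ 2 * (s - t) / σ ^ 2 ≤ σ₀ ^ 4 * T / σ ^ 2 := by
      rw [div_le_div_iff_of_pos_right (by positivity : (0:ℝ) < σ ^ 2)]
      have h1 : γ s ^ 2 ≤ σ₀ ^ 4 := by nlinarith [hγub s hs0, hγs.le]
      nlinarith [sq_nonneg (γ s)]
    exact max_le hw (by have hT0 : (0:ℝ) ≤ T := le_trans ht hT; positivity)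
  set A := a * Real.sqrt (γ s) with hAdef
  have hA : 0 ≤ A := mul_nonneg ha (Real.sqrt_nonneg _)
  set m := (γ s / γ t) * (y - r) + r with hm
  have habs := abs_integral_gmS15_le (r := r) (A := A) hσ hA he0 m
  have hmr : |m - r| ≤ |y - r| := by
    rw [hm, show (γ s / γ t) * (y - r) + r - r = (γ s / γ t) * (y - r) by ring, abs_mul,
      abs_of_pos hc0]
    nlinarith [abs_nonneg (y - r)]
  have hIle : |∫ x, gmS15 r σ A (m + e * x) ∂(gaussianReal 0 1)|
      ≤ (|y - r| + Real.sqrt (σ₀ ^ 4 * T / σ ^ 2) * ∫ x, |x| ∂(gaussianReal 0 1)) / σ ^ 2 := by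
    refine habs.trans ?_
    gcongr
  calc |FS15 r σ γ a t y s|
      = (γ s / γ t) * |∫ x, gmS15 r σ A (m + e * x) ∂(gaussianReal 0 1)| := by
        unfold FS15
        rw [abs_mul, abs_of_pos hc0]
    _ ≤ 1 * ((|y - r| + Real.sqrt (σ₀ ^ 4 * T / σ ^ 2) *
          ∫ x, |x| ∂(gaussianReal 0 1)) / σ ^ 2) :=
        mul_le_mul hc1 hIle (abs_nonneg _) zero_le_one
    _ = _ := one_mul _

lemma FS15_intervalIntegrable (hσ : 0 < σ) (ha : 0 ≤ a) (hγm : Measurable γ)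
    (hγpos : ∀ s, 0 ≤ s → 0 < γ s) (hγanti : ∀ s u, 0 ≤ s → s ≤ u → γ u ≤ γ s)
    (hγub : ∀ s, 0 ≤ s → γ s ≤ σ₀ ^ 2)
    (ht : 0 ≤ t) (hT : t ≤ T) (y : ℝ) :
    IntervalIntegrable (fun s => FS15 r σ γ a t y s) volume t T := by
  rw [intervalIntegrable_iff_integrableOn_Ioc_of_le hT]
  refine Integrable.mono' (g := fun _ => (|y - r| + Real.sqrt (σ₀ ^ 4 * T / σ ^ 2) *
      ∫ x, |x| ∂(gaussianReal 0 1)) / σ ^ 2) ?_ ?_ ?_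
  · exact integrableOn_const measure_Ioc_lt_top.ne
  · exact (FS15_measurable hγm).aestronglyMeasurable.restrict
  · rw [ae_restrict_iff' measurableSet_Ioc]
    exact Filter.Eventually.of_forall fun s hs => by
      simpa [Real.norm_eq_abs] using FS15_bound hσ ha hγpos hγanti hγub ht hT y hs

lemma FS15_neg_of_lt (hσ : 0 < σ) (ha : 0 ≤ a)
    (hγpos : ∀ s, 0 ≤ s → 0 < γ s) (ht : 0 ≤ t) {y : ℝ} (hy : y < r)
    {s : ℝ} (hs : s ∈ Ioo t T) : FS15 r σ γ a t y s < 0 := by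
  obtain ⟨hst, hsT⟩ := hs
  have hs0 : (0:ℝ) ≤ s := le_of_lt (lt_of_le_of_lt ht hst)
  have hγs : 0 < γ s := hγpos s hs0
  have hγt : 0 < γ t := hγpos t ht
  have hc0 : 0 < γ s / γ t := div_pos hγs hγt
  have hA : 0 ≤ a * Real.sqrt (γ s) := mul_nonneg ha (Real.sqrt_nonneg _)
  have he : 0 < Real.sqrt ((Real.toNNReal (γ s ^ 2 * (s - t) / σ ^ 2) : ℝ)) := by
    apply Real.sqrt_pos.mpr
    rw [Real.coe_toNNReal']
    have : 0 < γ s ^ 2 * (s - t) / σ ^ 2 := by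
      apply div_pos (mul_pos (by positivity) (by linarith)) (by positivity)
    exact lt_max_of_lt_left this
  have hmlt : (γ s / γ t) * (y - r) + r < r := by nlinarith
  unfold FS15
  apply mul_neg_of_pos_of_neg hc0
  calc ∫ x, gmS15 r σ (a * Real.sqrt (γ s)) ((γ s / γ t) * (y - r) + r +
        Real.sqrt ((Real.toNNReal (γ s ^ 2 * (s - t) / σ ^ 2) : ℝ)) * x) ∂(gaussianReal 0 1)
      < ∫ x, gmS15 r σ (a * Real.sqrt (γ s)) (r +
        Real.sqrt ((Real.toNNReal (γ s ^ 2 * (s - t) / σ ^ 2) : ℝ)) * x) ∂(gaussianReal 0 1) :=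
        integral_gmS15_strict hσ hA he hmlt
    _ = 0 := integral_gmS15_symm hA _

lemma FS15_pos_of_gt (hσ : 0 < σ) (ha : 0 ≤ a)
    (hγpos : ∀ s, 0 ≤ s → 0 < γ s) (ht : 0 ≤ t) {y : ℝ} (hy : r < y)
    {s : ℝ} (hs : s ∈ Ioo t T) : 0 < FS15 r σ γ a t y s := by
  obtain ⟨hst, hsT⟩ := hs
  have hs0 : (0:ℝ) ≤ s := le_of_lt (lt_of_le_of_lt ht hst)
  have hγs : 0 < γ s := hγpos s hs0
  have hγt : 0 < γ t := hγpos t ht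
  have hc0 : 0 < γ s / γ t := div_pos hγs hγt
  have hA : 0 ≤ a * Real.sqrt (γ s) := mul_nonneg ha (Real.sqrt_nonneg _)
  have he : 0 < Real.sqrt ((Real.toNNReal (γ s ^ 2 * (s - t) / σ ^ 2) : ℝ)) := by
    apply Real.sqrt_pos.mpr
    rw [Real.coe_toNNReal']
    have : 0 < γ s ^ 2 * (s - t) / σ ^ 2 := by
      apply div_pos (mul_pos (by positivity) (by linarith)) (by positivity)
    exact lt_max_of_lt_left this
  have hmgt : r < (γ s / γ t) * (y - r) + r := by nlinarith
  unfold FS15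
  apply mul_pos hc0
  calc (0:ℝ) = ∫ x, gmS15 r σ (a * Real.sqrt (γ s)) (r +
        Real.sqrt ((Real.toNNReal (γ s ^ 2 * (s - t) / σ ^ 2) : ℝ)) * x) ∂(gaussianReal 0 1) :=
        (integral_gmS15_symm hA _).symm
    _ < _ := integral_gmS15_strict hσ hA he hmgt

lemma FS15_mono_y (hσ : 0 < σ) (ha : 0 ≤ a)
    (hγpos : ∀ s, 0 ≤ s → 0 < γ s) (ht : 0 ≤ t) {y y' : ℝ} (hy : y ≤ y')
    {s : ℝ} (hs : s ∈ Icc t T) : FS15 r σ γ a t y s ≤ FS15 r σ γ a t y' s := by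
  obtain ⟨hst, hsT⟩ := hs
  have hs0 : (0:ℝ) ≤ s := le_trans ht hst
  have hγs : 0 < γ s := hγpos s hs0
  have hγt : 0 < γ t := hγpos t ht
  have hc0 : 0 < γ s / γ t := div_pos hγs hγt
  have hA : 0 ≤ a * Real.sqrt (γ s) := mul_nonneg ha (Real.sqrt_nonneg _)
  have he : 0 ≤ Real.sqrt ((Real.toNNReal (γ s ^ 2 * (s - t) / σ ^ 2) : ℝ)) :=
    Real.sqrt_nonneg _
  have hm : (γ s / γ t) * (y - r) + r ≤ (γ s / γ t) * (y' - r) + r := by nlinarith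
  unfold FS15
  exact mul_le_mul_of_nonneg_left (integral_gmS15_mono hσ hA he hm) hc0.le

end FS15Props

/-- with f_y(t,y) = −∫ₜᵀ (γ(s)/γ(t)) E[g̃_y(s, Y^{t,y}(s))] ds, where
Y^{t,y}(s) is Gaussian with mean (γ(s)/γ(t))(y−r)+r and variance γ(s)²(s−t)/σ²,
one has f_y(t,y) > 0 for y < r and t ∈ [0,T), f_y(t,r) = 0 for all t ∈ [0,T],
f_y(t,y) < 0 for y > r and t ∈ [0,T), and y ↦ f_y(t,y) is monotonically decreasing
for each fixed t ∈ [0,T). -/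
theorem stmt_15 (r a σ σ₀ T : ℝ) (ha : 0 ≤ a) (hσ : 0 < σ) (hσ₀ : 0 < σ₀) (hT : 0 < T)
    (γ : ℝ → ℝ) (hγ : ∀ s, γ s = ((σ₀ ^ 2)⁻¹ + s * (σ ^ 2)⁻¹)⁻¹)
    (gty : ℝ → ℝ → ℝ)
    (hgty : ∀ s z, gty s z =
      -((if r - z + a * Real.sqrt (γ s) ≤ 0
          then (r - z + a * Real.sqrt (γ s)) / σ ^ 2 else 0)
        + (if 0 ≤ r - z - a * Real.sqrt (γ s)
          then (r - z - a * Real.sqrt (γ s)) / σ ^ 2 else 0)))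
    (fy : ℝ → ℝ → ℝ)
    (hfy : ∀ t y, fy t y = -∫ s in t..T, (γ s / γ t) *
      ∫ z, gty s z ∂(gaussianReal ((γ s / γ t) * (y - r) + r)
        (Real.toNNReal ((γ s) ^ 2 * (s - t) / σ ^ 2)))) :
    (∀ t ∈ Ico (0 : ℝ) T, ∀ y : ℝ, (y < r → 0 < fy t y) ∧ (r < y → fy t y < 0)) ∧
    (∀ t ∈ Icc (0 : ℝ) T, fy t r = 0) ∧
    (∀ t ∈ Ico (0 : ℝ) T, Antitone (fun y => fy t y)) := by
  -- basic γ facts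
  have hγm : Measurable γ := by
    rw [funext hγ]
    fun_prop
  have hγpos : ∀ s, 0 ≤ s → 0 < γ s := by
    intro s hs
    rw [hγ s]
    have h1 : 0 < (σ₀ ^ 2)⁻¹ := by positivity
    have h2 : 0 ≤ s * (σ ^ 2)⁻¹ := mul_nonneg hs (by positivity)
    exact inv_pos.mpr (by linarith)
  have hγanti : ∀ s u, 0 ≤ s → s ≤ u → γ u ≤ γ s := by
    intro s u hs hsu
    rw [hγ s, hγ u]
    have h1 : 0 < (σ₀ ^ 2)⁻¹ + s * (σ ^ 2)⁻¹ := by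
      have : 0 ≤ s * (σ ^ 2)⁻¹ := mul_nonneg hs (by positivity)
      have : 0 < (σ₀ ^ 2)⁻¹ := by positivity
      linarith [mul_nonneg hs (by positivity : (0:ℝ) ≤ (σ ^ 2)⁻¹)]
    apply inv_anti₀ h1
    have : s * (σ ^ 2)⁻¹ ≤ u * (σ ^ 2)⁻¹ :=
      mul_le_mul_of_nonneg_right hsu (by positivity)
    linarith
  have hγub : ∀ s, 0 ≤ s → γ s ≤ σ₀ ^ 2 := by
    intro s hs
    have h := hγanti 0 s le_rfl hs
    rw [hγ 0] at h
    simpa using h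
  -- rewrite fy in terms of FS15
  have hgm : ∀ s z, gty s z = gmS15 r σ (a * Real.sqrt (γ s)) z := by
    intro s z
    rw [hgty s z]
    unfold gmS15
    have hmax : max (z - r - a * Real.sqrt (γ s)) 0 =
        if r - z + a * Real.sqrt (γ s) ≤ 0 then z - r - a * Real.sqrt (γ s) else 0 := by
      split_ifs with h
      · exact max_eq_left (by linarith)
      · exact max_eq_right (by push_neg at h; linarith)
    have hmin : min (z - r + a * Real.sqrt (γ s)) 0 =
        if 0 ≤ r - z - a * Real.sqrt (γ s) then z - r + a * Real.sqrt (γ s) else 0 := by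
      split_ifs with h
      · exact min_eq_left (by linarith)
      · exact min_eq_right (by push_neg at h; linarith)
    rw [hmax, hmin]
    split_ifs <;> ring
  have hrew : ∀ t y, fy t y = -∫ s in t..T, FS15 r σ γ a t y s := by
    intro t y
    rw [hfy t y]
    congr 1
    refine intervalIntegral.integral_congr fun s _ => ?_
    unfold FS15
    congr 1
    calc ∫ z, gty s z ∂(gaussianReal ((γ s / γ t) * (y - r) + r)
          (Real.toNNReal ((γ s) ^ 2 * (s - t) / σ ^ 2)))
        = ∫ z, gmS15 r σ (a * Real.sqrt (γ s)) z ∂(gaussianReal ((γ s / γ t) * (y - r) + r)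
          (Real.toNNReal ((γ s) ^ 2 * (s - t) / σ ^ 2))) := by simp only [hgm]
      _ = _ := transfer_gaussianS15 (gmS15_measurable r σ _) _ _
  refine ⟨?_, ?_, ?_⟩
  · rintro t ⟨ht0, htT⟩ y
    have hii := FS15_intervalIntegrable (r := r) (σ₀ := σ₀) hσ ha hγm hγpos hγanti hγub ht0 htT.le y
    constructor
    · intro hy
      rw [hrew t y]
      have hpos : 0 < ∫ s in t..T, -FS15 r σ γ a t y s :=
        intervalIntegral.intervalIntegral_pos_of_pos_on hii.neg
          (fun s hs => neg_pos.mpr (FS15_neg_of_lt hσ ha hγpos ht0 hy hs)) htT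
      rwa [intervalIntegral.integral_neg] at hpos
    · intro hy
      rw [hrew t y]
      have hpos : 0 < ∫ s in t..T, FS15 r σ γ a t y s :=
        intervalIntegral.intervalIntegral_pos_of_pos_on hii
          (fun s hs => FS15_pos_of_gt hσ ha hγpos ht0 hy hs) htT
      linarith
  · intro t _
    rw [hrew t r]
    have hz : (fun s => FS15 r σ γ a t r s) = fun _ => (0:ℝ) :=
      funext fun s => FS15_r_zero hσ ha t s
    rw [hz]
    simp
  · rintro t ⟨ht0, htT⟩ y y' hyy'
    simp only
    rw [hrew t y, hrew t y']
    apply neg_le_neg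
    exact intervalIntegral.integral_mono_on htT.le
      (FS15_intervalIntegrable (r := r) (σ₀ := σ₀) hσ ha hγm hγpos hγanti hγub ht0 htT.le y)
      (FS15_intervalIntegrable (r := r) (σ₀ := σ₀) hσ ha hγm hγpos hγanti hγub ht0 htT.le y')
      (fun s hs => FS15_mono_y hσ ha hγpos ht0 hyy' hs)
end
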